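/- arXiv:0804.1752 — 2 statements merged into one kernel-verified Lean document; each statement's English description precedes it below -/
import Mathlib

section
/- On the open unit ball 𝔹⁴ ⊂ ℝ⁴ define λ²(x) = 4/(1−|x|²)², τ(x) = −4x/(1−|x|²), and T(x) = λ²(x)·τ(x) = −16x/(1−|x|²)³. Then for all x ∈ 𝔹⁴: 4Δ(λ²)(x) + 2 div T(x) = 32(4 + 2|x|²)/(1−|x|²)⁴, whereas λ²(x)|τ(x)|² = 64|x|²/(1−|x|²)⁴; hence 4Δ(λ²)(x) + 2 div T(x) ≠ λ²(x)|τ(x)|² for every x ∈ 𝔹⁴. -/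
noncomputable section

abbrev E (n : ℕ) := EuclideanSpace ℝ (Fin n)

/-- Partial derivative in the `i`-th coordinate direction. -/
def pd {m : ℕ} (u : E m → ℝ) (i : Fin m) : E m → ℝ :=
  fun x => fderiv ℝ u x (EuclideanSpace.single i 1)

/-- Euclidean Laplacian `Δu = Σᵢ ∂²u/∂xᵢ²`. -/
def lap {m : ℕ} (u : E m → ℝ) : E m → ℝ :=
  fun x => ∑ i, pd (pd u i) i x

/-- Euclidean divergence of a vector field. -/
def div' {m : ℕ} (V : E m → E m) : E m → ℝ :=
  fun x => ∑ i, pd (fun y => V y i) i x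

/-- Square dilation of the Poincaré ball metric: `λ²(x) = 4/(1−|x|²)²`. -/
def sqDil : E 4 → ℝ := fun x => 4 / (1 - ‖x‖ ^ 2) ^ 2

/-- Tension field `τ(x) = −4x/(1−|x|²)`. -/
def tau : E 4 → E 4 := fun x => (-4 / (1 - ‖x‖ ^ 2)) • x

/-- The vector field `T = λ²·τ = −16x/(1−|x|²)³`. -/
def T : E 4 → E 4 := fun x => sqDil x • tau x

open scoped RealInnerProductSpace

lemma hasFDerivAt_normSq (x : E 4) :
    HasFDerivAt (fun y : E 4 => ‖y‖ ^ 2) (2 • (innerSL ℝ x)) x := by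
  simpa using (hasFDerivAt_id x).norm_sq

/-- Derivative of `t ↦ c / (1 - t)^k`. -/
lemma hasDerivAt_aux (c : ℝ) (k : ℕ) (hk : k ≠ 0) {t : ℝ} (h : 1 - t ≠ 0) :
    HasDerivAt (fun t : ℝ => c / (1 - t) ^ k) (c * k / (1 - t) ^ (k + 1)) t := by
  have h1 : HasDerivAt (fun t : ℝ => (1 - t) ^ k)
      ((k : ℝ) * (1 - t) ^ (k - 1) * (-1)) t :=
    ((hasDerivAt_id t).const_sub 1).pow k
  have h2 := (hasDerivAt_const t c).div h1 (pow_ne_zero k h)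
  convert h2 using 1
  · rfl
  · rfl
  · rfl
  have hpow : (1 - t) ^ (k - 1) * (1 - t) ^ (k + 1) = ((1 - t) ^ k) ^ 2 := by
    rw [← pow_add, ← pow_mul]; congr 1; omega
  have hpow2 : (1 - t) ^ k * ((1 - t) ^ (k - 1) * (1 - t)) = (1 - t) ^ (k * 2) := by
    rw [← pow_succ, ← pow_add]; congr 1; omega
  rw [← hpow, div_eq_div_iff (pow_ne_zero _ h) (mul_ne_zero (pow_ne_zero _ h) (pow_ne_zero _ h))]
  ring

/-- Derivative of `y ↦ c / (1 - ‖y‖²)^k`. -/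
lemma hasFDerivAt_G (c : ℝ) (k : ℕ) (hk : k ≠ 0) {x : E 4} (h : 1 - ‖x‖ ^ 2 ≠ 0) :
    HasFDerivAt (fun y : E 4 => c / (1 - ‖y‖ ^ 2) ^ k)
      ((c * k / (1 - ‖x‖ ^ 2) ^ (k + 1)) • (2 • (innerSL ℝ x))) x := by
  have := (hasDerivAt_aux c k hk h).comp_hasFDerivAt (h₂ := fun t : ℝ => c / (1 - t) ^ k)
    (f := fun y : E 4 => ‖y‖ ^ 2) x (hasFDerivAt_normSq x)
  exact this

lemma pd_G (c : ℝ) (k : ℕ) (hk : k ≠ 0) (i : Fin 4) {x : E 4} (h : 1 - ‖x‖ ^ 2 ≠ 0) :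
    pd (fun y : E 4 => c / (1 - ‖y‖ ^ 2) ^ k) i x
      = 2 * (c * k / (1 - ‖x‖ ^ 2) ^ (k + 1)) * x i := by
  unfold pd
  rw [(hasFDerivAt_G c k hk h).fderiv]
  simp [EuclideanSpace.inner_single_right, real_inner_comm]
  ring

lemma hasFDerivAt_coord (x : E 4) (i : Fin 4) :
    HasFDerivAt (fun y : E 4 => y i)
      (EuclideanSpace.proj i : E 4 →L[ℝ] ℝ) x :=
  (EuclideanSpace.proj i : E 4 →L[ℝ] ℝ).hasFDerivAt

lemma pd_H (c : ℝ) (k : ℕ) (hk : k ≠ 0) (i : Fin 4) {x : E 4} (h : 1 - ‖x‖ ^ 2 ≠ 0) :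
    pd (fun y : E 4 => y i * (c / (1 - ‖y‖ ^ 2) ^ k)) i x
      = c / (1 - ‖x‖ ^ 2) ^ k
        + x i * (2 * (c * k / (1 - ‖x‖ ^ 2) ^ (k + 1)) * x i) := by
  unfold pd
  rw [HasFDerivAt.fderiv (f := fun y : E 4 => y i * (c / (1 - ‖y‖ ^ 2) ^ k))
    ((hasFDerivAt_coord x i).mul (hasFDerivAt_G c k hk h))]
  simp [EuclideanSpace.inner_single_right, real_inner_comm]
  ring

lemma sum_coord_sq (x : E 4) : ∑ i, x i * x i = ‖x‖ ^ 2 := by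
  have := PiLp.norm_sq_eq_of_L2 (fun _ : Fin 4 => ℝ) x
  rw [this]
  refine Finset.sum_congr rfl fun i _ => ?_
  rw [Real.norm_eq_abs, sq_abs, sq]

/-- On the unit ball `𝔹⁴`: `4Δ(λ²) + 2divT = 32(4+2|x|²)/(1−|x|²)⁴` while
`λ²|τ|² = 64|x|²/(1−|x|²)⁴`, so the trace identity for biharmonic morphisms fails
everywhere: the identity map to the Poincaré ball is not a biharmonic morphism. -/
theorem poincare_ball_trace_identity_fails (x : E 4) (hx : ‖x‖ < 1) :
    (∀ i : Fin 4, T x i = -16 * x i / (1 - ‖x‖ ^ 2) ^ 3) ∧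
    4 * lap sqDil x + 2 * div' T x = 32 * (4 + 2 * ‖x‖ ^ 2) / (1 - ‖x‖ ^ 2) ^ 4 ∧
    sqDil x * ‖tau x‖ ^ 2 = 64 * ‖x‖ ^ 2 / (1 - ‖x‖ ^ 2) ^ 4 ∧
    4 * lap sqDil x + 2 * div' T x ≠ sqDil x * ‖tau x‖ ^ 2 := by
  have hx2 : ‖x‖ ^ 2 < 1 := by nlinarith [norm_nonneg x]
  have hA : 1 - ‖x‖ ^ 2 ≠ 0 := by nlinarith
  have hApos : 0 < 1 - ‖x‖ ^ 2 := by nlinarith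
  -- T coordinates (holds everywhere, field identity)
  have hT : ∀ (y : E 4) (i : Fin 4), T y i = y i * (-16 / (1 - ‖y‖ ^ 2) ^ 3) := by
    intro y i
    have : T y i = sqDil y * ((-4 / (1 - ‖y‖ ^ 2)) * y i) := by
      simp [T, tau, PiLp.smul_apply, smul_eq_mul]
    rw [this]
    unfold sqDil
    rcases eq_or_ne (1 - ‖y‖ ^ 2) 0 with h0 | h0
    · simp [h0]
    · field_simp
      ring
  have hT' : ∀ i : Fin 4, T x i = -16 * x i / (1 - ‖x‖ ^ 2) ^ 3 := by
    intro i; rw [hT x i]; ring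
  -- Laplacian of sqDil
  have hlap : lap sqDil x = 64 / (1 - ‖x‖ ^ 2) ^ 3 + 96 * ‖x‖ ^ 2 / (1 - ‖x‖ ^ 2) ^ 4 := by
    unfold lap
    have hpd : ∀ i : Fin 4,
        pd (pd sqDil i) i x
          = 16 / (1 - ‖x‖ ^ 2) ^ 3
            + x i * (2 * (16 * 3 / (1 - ‖x‖ ^ 2) ^ 4) * x i) := by
      intro i
      have hev : pd sqDil i =ᶠ[nhds x] fun y : E 4 => y i * (16 / (1 - ‖y‖ ^ 2) ^ 3) := by
        have hopen : IsOpen {y : E 4 | 1 - ‖y‖ ^ 2 ≠ 0} := by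
          have : Continuous fun y : E 4 => 1 - ‖y‖ ^ 2 := by continuity
          exact isOpen_ne.preimage this
        filter_upwards [hopen.mem_nhds hA] with y hy
        have := pd_G 4 2 (by norm_num) i hy
        unfold sqDil
        rw [show pd (fun y : E 4 => 4 / (1 - ‖y‖ ^ 2) ^ 2) i y
            = 2 * (4 * (2:ℕ) / (1 - ‖y‖ ^ 2) ^ 3) * y i from this]
        push_cast
        ring
      have : pd (pd sqDil i) i x
          = pd (fun y : E 4 => y i * (16 / (1 - ‖y‖ ^ 2) ^ 3)) i x := by
        show fderiv ℝ (pd sqDil i) x _ = fderiv ℝ _ x _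
        rw [hev.fderiv_eq]
      rw [this, pd_H 16 3 (by norm_num) i hA]
      push_cast
      ring
    calc ∑ i, pd (pd sqDil i) i x
        = ∑ i : Fin 4, (16 / (1 - ‖x‖ ^ 2) ^ 3
            + x i * (2 * (16 * 3 / (1 - ‖x‖ ^ 2) ^ 4) * x i)) :=
          Finset.sum_congr rfl fun i _ => hpd i
      _ = 4 * (16 / (1 - ‖x‖ ^ 2) ^ 3)
            + (2 * (16 * 3 / (1 - ‖x‖ ^ 2) ^ 4)) * ∑ i, x i * x i := by
          rw [Finset.sum_add_distrib, Finset.mul_sum]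
          congr 1
          · simp [Finset.sum_const, Fintype.card_fin]
          · exact Finset.sum_congr rfl fun i _ => by ring
      _ = _ := by rw [sum_coord_sq]; ring
  -- divergence of T
  have hdiv : div' T x = -64 / (1 - ‖x‖ ^ 2) ^ 3 - 96 * ‖x‖ ^ 2 / (1 - ‖x‖ ^ 2) ^ 4 := by
    unfold div'
    have hTfun : ∀ i : Fin 4,
        (fun y : E 4 => T y i) = fun y : E 4 => y i * (-16 / (1 - ‖y‖ ^ 2) ^ 3) := by
      intro i; funext y; exact hT y i
    have hpd : ∀ i : Fin 4,
        pd (fun y : E 4 => T y i) i x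
          = -16 / (1 - ‖x‖ ^ 2) ^ 3
            + x i * (2 * (-16 * 3 / (1 - ‖x‖ ^ 2) ^ 4) * x i) := by
      intro i
      rw [hTfun i, pd_H (-16) 3 (by norm_num) i hA]
      push_cast
      ring
    calc ∑ i, pd (fun y : E 4 => T y i) i x
        = ∑ i : Fin 4, (-16 / (1 - ‖x‖ ^ 2) ^ 3
            + x i * (2 * (-16 * 3 / (1 - ‖x‖ ^ 2) ^ 4) * x i)) :=
          Finset.sum_congr rfl fun i _ => hpd i
      _ = 4 * (-16 / (1 - ‖x‖ ^ 2) ^ 3)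
            + (2 * (-16 * 3 / (1 - ‖x‖ ^ 2) ^ 4)) * ∑ i, x i * x i := by
          rw [Finset.sum_add_distrib, Finset.mul_sum]
          congr 1
          · simp [Finset.sum_const, Fintype.card_fin]
          · exact Finset.sum_congr rfl fun i _ => by ring
      _ = _ := by rw [sum_coord_sq]; ring
  -- main identity
  have hmain : 4 * lap sqDil x + 2 * div' T x
      = 32 * (4 + 2 * ‖x‖ ^ 2) / (1 - ‖x‖ ^ 2) ^ 4 := by
    rw [hlap, hdiv]
    field_simp
    ring
  -- the squared norm identity
  have hnorm : sqDil x * ‖tau x‖ ^ 2 = 64 * ‖x‖ ^ 2 / (1 - ‖x‖ ^ 2) ^ 4 := by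
    unfold sqDil tau
    rw [norm_smul]
    rw [mul_pow, Real.norm_eq_abs, sq_abs]
    field_simp
    ring
  refine ⟨hT', hmain, hnorm, ?_⟩
  rw [hmain, hnorm]
  intro h
  have h4 : (0:ℝ) < (1 - ‖x‖ ^ 2) ^ 4 := by positivity
  rw [div_eq_div_iff (ne_of_gt h4) (ne_of_gt h4)] at h
  nlinarith [h4]

end
end

section
/- Let n ≥ 2, U = {x ∈ ℝⁿ : xₙ > 0} the open upper half-space, and ρ : U → ℝ, ρ(x) = −ln xₙ. Define the vector field E(x) = Δ(∇ρ)(x) − Δρ(x)·∇ρ(x) + 2∇(|∇ρ|²)(x) + (2−n)|∇ρ(x)|²·∇ρ(x) − (n−1)e^{2ρ(x)}·∇ρ(x). Then E(x) = (2(n−4)/xₙ³)·eₙ for all x ∈ U, where eₙ is the n-th standard basis vector; consequently E ≡ 0 on U if and only if n = 4. -/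
noncomputable section

open Filter Topology

lemma pd_congr {N : ℕ} {u v : E N → ℝ} {x : E N} (h : u =ᶠ[𝓝 x] v) (i : Fin N) :
    pd u i x = pd v i x := by
  unfold pd; rw [h.fderiv_eq]

lemma pd_congr_ev {N : ℕ} {u v : E N → ℝ} {x : E N} (h : u =ᶠ[𝓝 x] v) (i : Fin N) :
    pd u i =ᶠ[𝓝 x] pd v i := by
  filter_upwards [h.eventuallyEq_nhds] with y hy
  exact pd_congr hy i

lemma lap_congr {N : ℕ} {u v : E N → ℝ} {x : E N} (h : u =ᶠ[𝓝 x] v) :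
    lap u x = lap v x := by
  unfold lap
  exact Finset.sum_congr rfl fun i _ => pd_congr (pd_congr_ev h i) i

lemma gradient_congr {N : ℕ} {u v : E N → ℝ} {x : E N} (h : u =ᶠ[𝓝 x] v) :
    gradient u x = gradient v x := by
  unfold gradient; rw [h.fderiv_eq]

lemma hasFDerivAt_comp_proj {N : ℕ} {f : ℝ → ℝ} {c : ℝ} {m : Fin N} {y : E N}
    (h : HasDerivAt f c (y m)) :
    HasFDerivAt (fun z : E N => f (z m))
      (((1 : ℝ →L[ℝ] ℝ).smulRight c).comp (EuclideanSpace.proj m)) y := by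
  have hp : HasFDerivAt (fun z : E N => z m) (EuclideanSpace.proj (𝕜 := ℝ) m) y :=
    (EuclideanSpace.proj (𝕜 := ℝ) m).hasFDerivAt
  exact h.hasFDerivAt.comp y hp

lemma pd_comp {N : ℕ} {f : ℝ → ℝ} {c : ℝ} {m : Fin N} {y : E N}
    (h : HasDerivAt f c (y m)) (j : Fin N) :
    pd (fun z : E N => f (z m)) j y = (EuclideanSpace.single j (1:ℝ)) m * c := by
  unfold pd
  rw [(hasFDerivAt_comp_proj h).fderiv]
  simp [smul_eq_mul]

lemma grad_comp {N : ℕ} {f : ℝ → ℝ} {c : ℝ} {m : Fin N} {x : E N}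
    (h : HasDerivAt f c (x m)) :
    HasGradientAt (fun z : E N => f (z m)) (c • EuclideanSpace.single m 1) x := by
  rw [hasGradientAt_iff_hasFDerivAt]
  refine (hasFDerivAt_comp_proj h).congr_fderiv ?_
  apply ContinuousLinearMap.ext
  intro v
  simp [InnerProductSpace.toDual_apply_apply, real_inner_smul_left,
    EuclideanSpace.inner_single_left, smul_eq_mul, mul_comm]

lemma lap_comp {N : ℕ} {f f' : ℝ → ℝ} {c : ℝ} {x : E N} {m : Fin N}
    (hf : ∀ᶠ t in 𝓝 (x m), HasDerivAt f (f' t) t)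
    (hf' : HasDerivAt f' c (x m)) :
    lap (fun y : E N => f (y m)) x = c := by
  have hev : ∀ᶠ y : E N in 𝓝 x, HasDerivAt f (f' (y m)) (y m) :=
    (EuclideanSpace.proj (𝕜 := ℝ) m).continuous.continuousAt.eventually hf
  unfold lap
  have key : ∀ j : Fin N, pd (fun y : E N => f (y m)) j =ᶠ[𝓝 x]
      fun y => (EuclideanSpace.single j (1:ℝ)) m * f' (y m) :=
    fun j => hev.mono fun y hy => pd_comp hy j
  have hterm : ∀ j : Fin N, pd (pd (fun y : E N => f (y m)) j) j x
      = (EuclideanSpace.single j (1:ℝ)) m * ((EuclideanSpace.single j (1:ℝ)) m * c) := by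
    intro j
    rw [pd_congr (key j) j, pd_comp (hf'.const_mul ((EuclideanSpace.single j (1:ℝ)) m)) j]
  rw [Finset.sum_congr rfl fun j _ => hterm j]
  simp [EuclideanSpace.single_apply, ite_mul, Finset.sum_ite_eq]

lemma key_lemma (n : ℕ) (hn : 2 ≤ n) (m : Fin n) :
    ∀ x : E n, 0 < x m → ∀ i : Fin n,
      (lap (fun y => gradient (fun z : E n => -Real.log (z m)) y i) x
        - lap (fun z : E n => -Real.log (z m)) x
            * gradient (fun z : E n => -Real.log (z m)) x i
        + 2 * gradient (fun y =>
            ‖gradient (fun z : E n => -Real.log (z m)) y‖ ^ 2) x i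
        + (2 - (n : ℝ))
            * ‖gradient (fun z : E n => -Real.log (z m)) x‖ ^ 2
            * gradient (fun z : E n => -Real.log (z m)) x i
        - ((n : ℝ) - 1)
            * Real.exp (2 * (-Real.log (x m)))
            * gradient (fun z : E n => -Real.log (z m)) x i)
        = 2 * ((n : ℝ) - 4) / (x m) ^ 3 * (EuclideanSpace.single m (1 : ℝ)) i := by
  intro x hx i
  have ht : x m ≠ 0 := hx.ne'
  set s : ℝ := EuclideanSpace.single m (1:ℝ) i with hs
  have hpos : ∀ᶠ y : E n in 𝓝 x, 0 < y m :=
    (EuclideanSpace.proj (𝕜 := ℝ) m).continuous.continuousAt.eventually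
      (eventually_gt_nhds hx)
  have hgrad : ∀ᶠ y : E n in 𝓝 x,
      gradient (fun z : E n => -Real.log (z m)) y
        = (-(y m)⁻¹) • EuclideanSpace.single m 1 := by
    filter_upwards [hpos] with y hy
    exact (grad_comp ((Real.hasDerivAt_log hy.ne').neg)).gradient
  have gx : gradient (fun z : E n => -Real.log (z m)) x
      = (-(x m)⁻¹) • EuclideanSpace.single m 1 :=
    (grad_comp ((Real.hasDerivAt_log ht).neg)).gradient
  have gxi : gradient (fun z : E n => -Real.log (z m)) x i = s * -(x m)⁻¹ := by
    rw [gx, PiLp.smul_apply, smul_eq_mul, mul_comm]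
  -- T1 : laplacian of i-th gradient component
  have hf : ∀ᶠ t in 𝓝 (x m), HasDerivAt (fun u : ℝ => s * -u⁻¹) (s * -(-(t^2)⁻¹)) t := by
    filter_upwards [eventually_ne_nhds ht] with t htn
    exact (hasDerivAt_inv htn).neg.const_mul s
  have hf' : HasDerivAt (fun t : ℝ => s * -(-(t^2)⁻¹))
      (s * (-(2 * x m) / ((x m)^2)^2)) (x m) := by
    simp only [neg_neg]
    have h := ((hasDerivAt_pow 2 (x m)).inv (pow_ne_zero 2 ht)).const_mul s
    refine h.congr_deriv ?_
    push_cast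
    ring
  have hev1 : (fun y : E n => gradient (fun z : E n => -Real.log (z m)) y i)
      =ᶠ[𝓝 x] fun y => s * -(y m)⁻¹ := by
    filter_upwards [hgrad] with y hy
    rw [hy, PiLp.smul_apply, smul_eq_mul, mul_comm]
  have T1 : lap (fun y : E n => gradient (fun z : E n => -Real.log (z m)) y i) x
      = s * (-(2 * x m) / ((x m)^2)^2) := by
    rw [lap_congr hev1]
    exact lap_comp hf hf'
  -- T2 : laplacian of ρ
  have T2 : lap (fun z : E n => -Real.log (z m)) x = -(-((x m)^2)⁻¹) := by
    apply lap_comp (f := fun t : ℝ => -Real.log t) (f' := fun t : ℝ => -t⁻¹)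
    · filter_upwards [eventually_gt_nhds hx] with t htp
      exact (Real.hasDerivAt_log htp.ne').neg
    · exact (hasDerivAt_inv ht).neg
  -- norm squared
  have hevN : (fun y : E n => ‖gradient (fun z : E n => -Real.log (z m)) y‖ ^ 2)
      =ᶠ[𝓝 x] fun y => ((y m)^2)⁻¹ := by
    filter_upwards [hgrad] with y hy
    rw [hy, norm_smul]
    simp [Real.norm_eq_abs, mul_pow, sq_abs, inv_pow]
  have nx : ‖gradient (fun z : E n => -Real.log (z m)) x‖ ^ 2 = ((x m)^2)⁻¹ :=
    hevN.eq_of_nhds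
  -- T3 : gradient of norm squared
  have T3 : gradient (fun y : E n =>
      ‖gradient (fun z : E n => -Real.log (z m)) y‖ ^ 2) x
      = (-(2 * x m) / ((x m)^2)^2) • EuclideanSpace.single m 1 := by
    rw [gradient_congr hevN]
    have h := (grad_comp (x := x) (m := m)
      ((hasDerivAt_pow 2 (x m)).inv (pow_ne_zero 2 ht))).gradient
    refine Eq.trans h ?_
    congr 1
    push_cast
    ring
  have T3i : gradient (fun y : E n =>
      ‖gradient (fun z : E n => -Real.log (z m)) y‖ ^ 2) x i
      = s * (-(2 * x m) / ((x m)^2)^2) := by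
    rw [T3, PiLp.smul_apply, smul_eq_mul, mul_comm]
  -- exponential
  have hexp : Real.exp (2 * (-Real.log (x m))) = ((x m)^2)⁻¹ := by
    have h2 : (2:ℝ) * Real.log (x m) = Real.log ((x m)^2) := by
      rw [Real.log_pow]; push_cast; ring
    rw [mul_neg, Real.exp_neg, h2, Real.exp_log (pow_pos hx 2)]
  rw [T1, T2, gxi, T3i, nx, hexp]
  field_simp
  ring

/-- The biharmonicity equation for the identity map from the flat upper half-space to the
hyperbolic metric `e^{2ρ}ds² = xₙ⁻²ds²`, `ρ = −ln xₙ`: the vector field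
`E = Δ(∇ρ) − Δρ·∇ρ + 2∇(|∇ρ|²) + (2−n)|∇ρ|²∇ρ − (n−1)e^{2ρ}∇ρ` equals
`(2(n−4)/xₙ³)eₙ`, hence vanishes identically iff `n = 4`. -/
theorem half_space_biharmonic_iff_dim_four (n : ℕ) (hn : 2 ≤ n) :
    (∀ x : E n, 0 < x ⟨n - 1, by omega⟩ → ∀ i : Fin n,
      (lap (fun y => gradient (fun z : E n => -Real.log (z ⟨n - 1, by omega⟩)) y i) x
        - lap (fun z : E n => -Real.log (z ⟨n - 1, by omega⟩)) x
            * gradient (fun z : E n => -Real.log (z ⟨n - 1, by omega⟩)) x i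
        + 2 * gradient (fun y =>
            ‖gradient (fun z : E n => -Real.log (z ⟨n - 1, by omega⟩)) y‖ ^ 2) x i
        + (2 - (n : ℝ))
            * ‖gradient (fun z : E n => -Real.log (z ⟨n - 1, by omega⟩)) x‖ ^ 2
            * gradient (fun z : E n => -Real.log (z ⟨n - 1, by omega⟩)) x i
        - ((n : ℝ) - 1)
            * Real.exp (2 * (-Real.log (x ⟨n - 1, by omega⟩)))
            * gradient (fun z : E n => -Real.log (z ⟨n - 1, by omega⟩)) x i)
        = 2 * ((n : ℝ) - 4) / (x ⟨n - 1, by omega⟩) ^ 3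
            * (EuclideanSpace.single (⟨n - 1, by omega⟩ : Fin n) (1 : ℝ)) i) ∧
    ((∀ x : E n, 0 < x ⟨n - 1, by omega⟩ → ∀ i : Fin n,
      (lap (fun y => gradient (fun z : E n => -Real.log (z ⟨n - 1, by omega⟩)) y i) x
        - lap (fun z : E n => -Real.log (z ⟨n - 1, by omega⟩)) x
            * gradient (fun z : E n => -Real.log (z ⟨n - 1, by omega⟩)) x i
        + 2 * gradient (fun y =>
            ‖gradient (fun z : E n => -Real.log (z ⟨n - 1, by omega⟩)) y‖ ^ 2) x i
        + (2 - (n : ℝ))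
            * ‖gradient (fun z : E n => -Real.log (z ⟨n - 1, by omega⟩)) x‖ ^ 2
            * gradient (fun z : E n => -Real.log (z ⟨n - 1, by omega⟩)) x i
        - ((n : ℝ) - 1)
            * Real.exp (2 * (-Real.log (x ⟨n - 1, by omega⟩)))
            * gradient (fun z : E n => -Real.log (z ⟨n - 1, by omega⟩)) x i)
        = 0) ↔ n = 4) := by
  have hm : n - 1 < n := by omega
  have key := key_lemma n hn ⟨n - 1, hm⟩
  refine ⟨key, ?_, ?_⟩
  · intro h
    set m : Fin n := ⟨n - 1, hm⟩
    set x : E n := EuclideanSpace.single m (1:ℝ) with hxdef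
    have hx : 0 < x m := by simp [hxdef]
    have h0 := (key x hx m).symm.trans (h x hx m)
    have hx1 : x m = 1 := by simp [hxdef]
    rw [hx1] at h0
    simp only [EuclideanSpace.single_apply, if_pos rfl, one_pow, div_one, mul_one] at h0
    have : (n : ℝ) = 4 := by linarith
    exact_mod_cast this
  · intro h
    subst h
    intro x hx i
    refine (key x hx i).trans ?_
    norm_num

end
end
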